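/- arXiv:2005.04653 — 3 statements merged into one kernel-verified Lean document; each statement's English description precedes it below -/
import Mathlib

section
/- Resonance lower bound for equal signs: Let 0 < c < 1, ξ₁, ξ₂ ∈ ℝ³, τ₁, τ₂ ∈ ℝ, and set ξ = ξ₁ + ξ₂, τ = τ₁ + τ₂. Then for either choice of sign ±₀: max(⟨τ ±₀ c|ξ|⟩, ⟨τ₁ − |ξ₁|⟩, ⟨τ₂ − |ξ₂|⟩) ≥ ((1−c)/3)(|ξ₁| + |ξ₂|); in particular this maximum is at least ((1−c)/3)·max(|ξ₁|, |ξ₂|). -/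
noncomputable section

open MeasureTheory Real ENNReal


abbrev Sp3 := EuclideanSpace ℝ (Fin 3)

/-- Japanese bracket `⟨r⟩ = (1 + r²)^{1/2}`. -/
def jb (r : ℝ) : ℝ := Real.sqrt (1 + r ^ 2)

/-- Space-time Fourier transform on `ℝ³ × ℝ`. -/
def ftST (u : Sp3 × ℝ → ℂ) (p : Sp3 × ℝ) : ℂ :=
  ∫ q : Sp3 × ℝ, Complex.exp (-Complex.I * (((inner ℝ q.1 p.1 : ℝ) + q.2 * p.2 : ℝ) : ℂ)) * u q

/-- Inverse space-time Fourier transform on `ℝ³ × ℝ`. -/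
def ftSTinv (u : Sp3 × ℝ → ℂ) (q : Sp3 × ℝ) : ℂ :=
  (((2 * Real.pi) ^ (4 : ℕ) : ℝ) : ℂ)⁻¹ *
    ∫ p : Sp3 × ℝ, Complex.exp (Complex.I * (((inner ℝ q.1 p.1 : ℝ) + q.2 * p.2 : ℝ) : ℂ)) * u p

/-- `X^{s,b}`-type norm with sign `σ` and propagation speed `c` (wave case: `c = 1`). -/
def Xnorm (σ c s b : ℝ) (u : Sp3 × ℝ → ℂ) : ℝ≥0∞ :=
  (∫⁻ p : Sp3 × ℝ,
      ENNReal.ofReal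
        (jb ‖p.1‖ ^ (2 * s) * jb (p.2 + σ * c * ‖p.1‖) ^ (2 * b) * ‖ftST u p‖ ^ 2)) ^ (1 / 2 : ℝ)

/-- Dyadic frequency-modulation block `K^{σ,c}_{N,L}`. -/
def Kset (σ c N L : ℝ) : Set (Sp3 × ℝ) :=
  {p | N ≤ jb ‖p.1‖ ∧ jb ‖p.1‖ ≤ 2 * N ∧ L ≤ jb (p.2 + σ * c * ‖p.1‖) ∧
    jb (p.2 + σ * c * ‖p.1‖) ≤ 2 * L}

/-- Space-time Fourier projection onto the set `K`. -/
def Pproj (K : Set (Sp3 × ℝ)) (u : Sp3 × ℝ → ℂ) : Sp3 × ℝ → ℂ :=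
  ftSTinv (K.indicator (ftST u))

def IsDyadic (N : ℝ) : Prop := ∃ k : ℕ, N = 2 ^ k

/-- `Q_ω`: space-time frequencies whose spatial direction lies in `ω ⊆ S²`. -/
def Qcap (ω : Set Sp3) : Set (Sp3 × ℝ) := {p | p.1 ≠ 0 ∧ ‖p.1‖⁻¹ • p.1 ∈ ω}

/-- Angular separation of two subsets of the sphere. -/
def angSep (ω₁ ω₂ : Set Sp3) : ℝ :=
  sInf {θ : ℝ | ∃ x ∈ ω₁, ∃ y ∈ ω₂, θ = InnerProductGeometry.angle x y}

/-- The trilinear convolution form `I(f,g₁,g₂)`. -/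
def trI (f g₁ g₂ : Sp3 × ℝ → ℂ) : ℂ :=
  ∫ q : (Sp3 × ℝ) × (Sp3 × ℝ), f (q.1.1 + q.2.1, q.1.2 + q.2.2) * g₁ q.1 * g₂ q.2

/-- Resonance lower bound for equal signs (Lemma 1.1). -/
theorem resonance_equal_signs (c : ℝ) (hc0 : 0 < c) (hc1 : c < 1)
    (ξ₁ ξ₂ : Sp3) (τ₁ τ₂ : ℝ) (σ₀ : ℝ) (hσ₀ : σ₀ = 1 ∨ σ₀ = -1) :
    (1 - c) / 3 * (‖ξ₁‖ + ‖ξ₂‖) ≤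
        max (jb (τ₁ + τ₂ + σ₀ * c * ‖ξ₁ + ξ₂‖)) (max (jb (τ₁ - ‖ξ₁‖)) (jb (τ₂ - ‖ξ₂‖))) ∧
      (1 - c) / 3 * max ‖ξ₁‖ ‖ξ₂‖ ≤
        max (jb (τ₁ + τ₂ + σ₀ * c * ‖ξ₁ + ξ₂‖)) (max (jb (τ₁ - ‖ξ₁‖)) (jb (τ₂ - ‖ξ₂‖))) := by
  have jb_abs : ∀ r : ℝ, |r| ≤ jb r := by
    intro r
    rw [jb]
    calc |r| = Real.sqrt (r ^ 2) := by rw [Real.sqrt_sq_eq_abs]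
    _ ≤ Real.sqrt (1 + r ^ 2) := Real.sqrt_le_sqrt (by linarith)
  set a := τ₁ + τ₂ + σ₀ * c * ‖ξ₁ + ξ₂‖ with ha
  set b := τ₁ - ‖ξ₁‖ with hb
  set d := τ₂ - ‖ξ₂‖ with hd
  set M := max (jb a) (max (jb b) (jb d)) with hM
  have h1 : jb a ≤ M := le_max_left _ _
  have h2 : jb b ≤ M := le_trans (le_max_left _ _) (le_max_right _ _)
  have h3 : jb d ≤ M := le_trans (le_max_right _ _) (le_max_right _ _)
  have habs : |σ₀| = 1 := by rcases hσ₀ with h | h <;> simp [h]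
  have hξ : ‖ξ₁ + ξ₂‖ ≤ ‖ξ₁‖ + ‖ξ₂‖ := norm_add_le _ _
  have hξpos : (0:ℝ) ≤ ‖ξ₁ + ξ₂‖ := norm_nonneg _
  have key : (1 - c) * (‖ξ₁‖ + ‖ξ₂‖) ≤ |a| + |b| + |d| := by
    have h4 : |‖ξ₁‖ + ‖ξ₂‖ + σ₀ * c * ‖ξ₁ + ξ₂‖| ≤ |a| + |b| + |d| := by
      have he : ‖ξ₁‖ + ‖ξ₂‖ + σ₀ * c * ‖ξ₁ + ξ₂‖ = a - b - d := by
        rw [ha, hb, hd]; ring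
      rw [he]
      calc |a - b - d| ≤ |a - b| + |d| := abs_sub _ _
      _ ≤ |a| + |b| + |d| := by have := abs_sub a b; linarith
    have h5 : (1 - c) * (‖ξ₁‖ + ‖ξ₂‖) ≤ ‖ξ₁‖ + ‖ξ₂‖ + σ₀ * c * ‖ξ₁ + ξ₂‖ := by
      have habs2 : |σ₀ * c * ‖ξ₁ + ξ₂‖| = c * ‖ξ₁ + ξ₂‖ := by
        rw [abs_mul, abs_mul, habs, abs_of_pos hc0, abs_of_nonneg hξpos]; ring
      have hneg := neg_abs_le (σ₀ * c * ‖ξ₁ + ξ₂‖)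
      rw [habs2] at hneg
      nlinarith
    exact le_trans (le_trans h5 (le_abs_self _)) h4
  have hsum : |a| + |b| + |d| ≤ 3 * M := by
    have := jb_abs a; have := jb_abs b; have := jb_abs d; linarith
  have main : (1 - c) / 3 * (‖ξ₁‖ + ‖ξ₂‖) ≤ M := by linarith
  refine ⟨main, le_trans ?_ main⟩
  have hm : max ‖ξ₁‖ ‖ξ₂‖ ≤ ‖ξ₁‖ + ‖ξ₂‖ :=
    max_le (le_add_of_nonneg_right (norm_nonneg _)) (le_add_of_nonneg_left (norm_nonneg _))
  nlinarith [norm_nonneg ξ₁, norm_nonneg ξ₂]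
end
end

section
/- Resonance lower bound for opposite signs at separated frequencies: Let 0 < c < 1, ξ₁, ξ₂ ∈ ℝ³, τ₁, τ₂ ∈ ℝ, set ξ = ξ₁ + ξ₂ and τ = τ₁ + τ₂, and assume |ξ₂| ≤ ((1−c)/(2(1+c)))|ξ₁| or |ξ₁| ≤ ((1−c)/(2(1+c)))|ξ₂|. Then for either choice of sign ±₀: max(⟨τ ±₀ c|ξ|⟩, ⟨τ₁ − |ξ₁|⟩, ⟨τ₂ + |ξ₂|⟩) ≥ ((1−c)/6)·max(|ξ₁|, |ξ₂|). -/
noncomputable section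

open MeasureTheory Real ENNReal


lemma abs_le_jb (r : ℝ) : |r| ≤ jb r := by
  rw [jb, ← Real.sqrt_sq_eq_abs]
  exact Real.sqrt_le_sqrt (by nlinarith)

/-- Resonance lower bound for opposite signs at separated frequencies (Lemma 1.2). -/
theorem resonance_opposite_signs (c : ℝ) (hc0 : 0 < c) (hc1 : c < 1)
    (ξ₁ ξ₂ : Sp3) (τ₁ τ₂ : ℝ)
    (hsep : ‖ξ₂‖ ≤ (1 - c) / (2 * (1 + c)) * ‖ξ₁‖ ∨ ‖ξ₁‖ ≤ (1 - c) / (2 * (1 + c)) * ‖ξ₂‖)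
    (σ₀ : ℝ) (hσ₀ : σ₀ = 1 ∨ σ₀ = -1) :
    (1 - c) / 6 * max ‖ξ₁‖ ‖ξ₂‖ ≤
      max (jb (τ₁ + τ₂ + σ₀ * c * ‖ξ₁ + ξ₂‖)) (max (jb (τ₁ - ‖ξ₁‖)) (jb (τ₂ + ‖ξ₂‖))) := by
  set a := ‖ξ₁‖ with ha'
  set b := ‖ξ₂‖ with hb'
  set s := ‖ξ₁ + ξ₂‖ with hs'
  have ha : 0 ≤ a := norm_nonneg _
  have hb : 0 ≤ b := norm_nonneg _
  have hs : 0 ≤ s := norm_nonneg _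
  have hst : s ≤ a + b := norm_add_le _ _
  set A := τ₁ + τ₂ + σ₀ * c * s with hA'
  set B := τ₁ - a with hB'
  set C := τ₂ + b with hC'
  have hA : A ≤ jb A ∧ -A ≤ jb A := ⟨le_trans (le_abs_self A) (abs_le_jb A), le_trans (neg_le_abs A) (abs_le_jb A)⟩
  have hB : B ≤ jb B ∧ -B ≤ jb B := ⟨le_trans (le_abs_self B) (abs_le_jb B), le_trans (neg_le_abs B) (abs_le_jb B)⟩
  have hC : C ≤ jb C ∧ -C ≤ jb C := ⟨le_trans (le_abs_self C) (abs_le_jb C), le_trans (neg_le_abs C) (abs_le_jb C)⟩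
  set M := max (jb A) (max (jb B) (jb C)) with hM'
  have hMA : jb A ≤ M := le_max_left _ _
  have hMB : jb B ≤ M := le_trans (le_max_left _ _) (le_max_right _ _)
  have hMC : jb C ≤ M := le_trans (le_max_right _ _) (le_max_right _ _)
  have hc1' : (0:ℝ) < 2 * (1 + c) := by linarith
  have hcs : 0 ≤ c * s := mul_nonneg hc0.le hs
  have hcs' : c * s ≤ c * (a + b) := mul_le_mul_of_nonneg_left hst hc0.le
  have key : (1 - c) / 2 * max a b ≤ |σ₀ * c * s + a - b| := by
    rcases hsep with h | h
    · rw [div_mul_eq_mul_div, le_div_iff₀ hc1'] at h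
      have hba : b ≤ a := by nlinarith
      rw [max_eq_left hba]
      rcases hσ₀ with h1 | h1 <;> subst h1
      · refine le_trans ?_ (le_abs_self _)
        nlinarith
      · refine le_trans ?_ (le_abs_self _)
        nlinarith
    · rw [div_mul_eq_mul_div, le_div_iff₀ hc1'] at h
      have hab : a ≤ b := by nlinarith
      rw [max_eq_right hab]
      rcases hσ₀ with h1 | h1 <;> subst h1
      · refine le_trans ?_ (neg_le_abs _)
        nlinarith
      · refine le_trans ?_ (neg_le_abs _)
        nlinarith
  have hcomb : σ₀ * c * s + a - b = A - B - C := by rw [hA', hB', hC']; ring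
  have h3 : |σ₀ * c * s + a - b| ≤ 3 * M := by
    rcases abs_cases (σ₀ * c * s + a - b) with ⟨heq, _⟩ | ⟨heq, _⟩ <;>
      rw [heq, hcomb] <;> linarith [hA.1, hA.2, hB.1, hB.2, hC.1, hC.2]
  linarith
end
end

section
/- Resonance lower bound for almost antipodal frequencies: Let 0 < c < 1. Let ξ₁, ξ₂ ∈ ℝ³ be nonzero, ξ := ξ₁ + ξ₂, τ₁, τ₂ ∈ ℝ, τ := τ₁ + τ₂, and let N₀, N₁, N₂ ≥ 1 satisfy N₀ ≤ 2|ξ|, |ξ₁| ≤ 2N₁ and |ξ₂| ≤ 2N₂. Suppose M₁ ≥ 2⁵(1−c)^{−1/2}(N₁N₂)^{1/2}/N₀ and 0 ≤ π − ∠(ξ₁,ξ₂) ≤ π/M₁. Then for either sign ±: max(⟨τ ± c|ξ|⟩, ⟨τ₁ − |ξ₁|⟩, ⟨τ₂ + |ξ₂|⟩) ≥ ((1−c)/12)|ξ|. -/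
noncomputable section

open MeasureTheory Real ENNReal
open scoped NNReal


set_option maxHeartbeats 1000000 in
lemma res_arith_aux (c X a b N₀ N₁ N₂ M₁ φ cost : ℝ)
    (hc0 : 0 < c) (hc1 : c < 1)
    (ha0 : 0 < a) (hb0 : 0 < b) (hX0 : 0 < X)
    (hN₀ : 1 ≤ N₀) (hN₁ : 1 ≤ N₁) (hN₂ : 1 ≤ N₂)
    (hξ : N₀ ≤ 2 * X) (haN : a ≤ 2 * N₁) (hbN : b ≤ 2 * N₂)
    (hM₁0 : 0 < M₁) (hM₁sq : 1024 * (N₁ * N₂) ≤ M₁ ^ 2 * (1 - c) * N₀ ^ 2)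
    (hφ0 : 0 ≤ φ) (hφM : φ * M₁ ≤ Real.pi)
    (hXsq : X ^ 2 = (a - b) ^ 2 + 2 * a * b * (1 + cost))
    (hcos : 2 * (1 + cost) ≤ φ ^ 2) :
    (1 - c) / 4 * X + c * X ≤ |a - b| := by
  have htc : 0 < 1 - c := by linarith
  have hπp : (0:ℝ) < Real.pi := Real.pi_pos
  have hπ2 : Real.pi ^ 2 < 10 := by
    have := Real.pi_lt_d2
    nlinarith
  have hNN : (0:ℝ) < N₁ * N₂ := mul_pos (by linarith) (by linarith)
  have hφsq : φ ^ 2 * M₁ ^ 2 ≤ Real.pi ^ 2 := by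
    have h := mul_le_mul hφM hφM (mul_nonneg hφ0 hM₁0.le) hπp.le
    nlinarith [h]
  have hab2 : a * b ≤ 4 * (N₁ * N₂) := by
    have := mul_le_mul haN hbN hb0.le (by linarith : (0:ℝ) ≤ 2 * N₁)
    nlinarith [this]
  have h1 : a * b * (φ ^ 2 * M₁ ^ 2) ≤ 4 * (N₁ * N₂) * Real.pi ^ 2 :=
    mul_le_mul hab2 hφsq (by positivity) (by nlinarith)
  have key : a * b * φ ^ 2 ≤ Real.pi ^ 2 * (1 - c) * N₀ ^ 2 / 256 := by
    have hnn : 0 ≤ a * b * φ ^ 2 := by positivity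
    have t1 := mul_le_mul_of_nonneg_right h1 (by positivity : (0:ℝ) ≤ (1 - c) * N₀ ^ 2)
    have t2 := mul_le_mul_of_nonneg_right hM₁sq hnn
    nlinarith [t1, t2, hNN]
  have e1 : 2 * a * b * (1 + cost) ≤ a * b * φ ^ 2 := by
    nlinarith [mul_pos ha0 hb0, hcos]
  have hN4 : N₀ ^ 2 ≤ 4 * X ^ 2 := by nlinarith
  have e2 : Real.pi ^ 2 * (1 - c) * N₀ ^ 2 / 256 ≤ Real.pi ^ 2 * (1 - c) * X ^ 2 / 64 := by
    nlinarith [mul_nonneg (sq_nonneg Real.pi) htc.le, hN4]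
  have hD2 : X ^ 2 * (1 - Real.pi ^ 2 * (1 - c) / 64) ≤ (a - b) ^ 2 := by
    nlinarith [hXsq, e1, key, e2]
  have hk0 : 0 < 1 - Real.pi ^ 2 * (1 - c) / 64 := by nlinarith [sq_nonneg Real.pi]
  have hk1 : 1 - Real.pi ^ 2 * (1 - c) / 64 ≤ 1 := by
    nlinarith [mul_nonneg (sq_nonneg Real.pi) htc.le]
  have hD : X * (1 - Real.pi ^ 2 * (1 - c) / 64) ≤ |a - b| := by
    nlinarith [hD2, sq_abs (a - b), abs_nonneg (a - b), mul_pos hX0 hk0,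
      mul_nonneg (sq_nonneg X) (mul_nonneg hk0.le (sub_nonneg.2 hk1))]
  have hstep : (1 - c) / 4 * X + c * X ≤ X * (1 - Real.pi ^ 2 * (1 - c) / 64) := by
    nlinarith [mul_nonneg (mul_pos hX0 htc).le (by nlinarith : (0:ℝ) ≤ 3 / 4 - Real.pi ^ 2 / 64)]
  linarith

set_option maxHeartbeats 1000000 in
/-- Resonance lower bound for almost antipodal frequencies (Proposition 3.6). -/
theorem resonance_almost_antipodal (c : ℝ) (hc0 : 0 < c) (hc1 : c < 1)
    (ξ₁ ξ₂ : Sp3) (hξ₁ : ξ₁ ≠ 0) (hξ₂ : ξ₂ ≠ 0) (τ₁ τ₂ : ℝ) (N₀ N₁ N₂ M₁ : ℝ)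
    (hN₀ : 1 ≤ N₀) (hN₁ : 1 ≤ N₁) (hN₂ : 1 ≤ N₂)
    (hξ : N₀ ≤ 2 * ‖ξ₁ + ξ₂‖) (hξ₁N : ‖ξ₁‖ ≤ 2 * N₁) (hξ₂N : ‖ξ₂‖ ≤ 2 * N₂)
    (hM₁ : 2 ^ 5 * (1 - c) ^ (-(1 / 2) : ℝ) * (N₁ * N₂) ^ (1 / 2 : ℝ) / N₀ ≤ M₁)
    (hang : Real.pi - InnerProductGeometry.angle ξ₁ ξ₂ ≤ Real.pi / M₁)
    (σ : ℝ) (hσ : σ = 1 ∨ σ = -1) :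
    (1 - c) / 12 * ‖ξ₁ + ξ₂‖ ≤
      max (jb (τ₁ + τ₂ + σ * c * ‖ξ₁ + ξ₂‖))
        (max (jb (τ₁ - ‖ξ₁‖)) (jb (τ₂ + ‖ξ₂‖))) := by
  have ha0 : 0 < ‖ξ₁‖ := norm_pos_iff.mpr hξ₁
  have hb0 : 0 < ‖ξ₂‖ := norm_pos_iff.mpr hξ₂
  have hX0 : 0 < ‖ξ₁ + ξ₂‖ := by linarith
  have htc : 0 < 1 - c := by linarith
  have hN₀0 : (0:ℝ) < N₀ := by linarith
  have hNN : (0:ℝ) < N₁ * N₂ := mul_pos (by linarith) (by linarith)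
  -- normalize the rpow hypothesis
  have hs : (1 - c) ^ (-(1 / 2) : ℝ) = (Real.sqrt (1 - c))⁻¹ := by
    rw [Real.rpow_neg htc.le, ← Real.sqrt_eq_rpow]
  have ht : (N₁ * N₂) ^ (1 / 2 : ℝ) = Real.sqrt (N₁ * N₂) := (Real.sqrt_eq_rpow _).symm
  rw [hs, ht] at hM₁
  obtain ⟨s, hsdef⟩ : ∃ s, Real.sqrt (1 - c) = s := ⟨_, rfl⟩
  obtain ⟨t, htdef⟩ : ∃ t, Real.sqrt (N₁ * N₂) = t := ⟨_, rfl⟩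
  rw [hsdef, htdef] at hM₁
  have hs0 : 0 < s := hsdef ▸ Real.sqrt_pos.mpr htc
  have hs2 : s ^ 2 = 1 - c := hsdef ▸ Real.sq_sqrt htc.le
  have ht0 : 0 < t := htdef ▸ Real.sqrt_pos.mpr hNN
  have ht2 : t ^ 2 = N₁ * N₂ := htdef ▸ Real.sq_sqrt hNN.le
  have hM₁' : 32 * t ≤ M₁ * (s * N₀) := by
    have h := mul_le_mul_of_nonneg_right hM₁ (le_of_lt (mul_pos hs0 hN₀0))
    have he : 2 ^ 5 * s⁻¹ * t / N₀ * (s * N₀) = 32 * (s⁻¹ * s) * (N₀ / N₀) * t := by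
      ring
    rw [inv_mul_cancel₀ hs0.ne', div_self hN₀0.ne'] at he
    rw [he] at h
    linarith
  have hM₁0 : 0 < M₁ := by
    have h1 : 0 < M₁ * (s * N₀) := lt_of_lt_of_le (by positivity) hM₁'
    have h2 := div_pos h1 (mul_pos hs0 hN₀0)
    rwa [mul_div_assoc, div_self (mul_pos hs0 hN₀0).ne', mul_one] at h2
  have hM₁sq : 1024 * (N₁ * N₂) ≤ M₁ ^ 2 * (1 - c) * N₀ ^ 2 := by
    have h := mul_le_mul hM₁' hM₁' (by positivity) (le_trans (by positivity) hM₁')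
    have e1 : 32 * t * (32 * t) = 1024 * (N₁ * N₂) := by rw [← ht2]; ring
    have e2 : M₁ * (s * N₀) * (M₁ * (s * N₀)) = M₁ ^ 2 * (1 - c) * N₀ ^ 2 := by
      rw [← hs2]; ring
    rw [e1, e2] at h
    exact h
  -- angle facts
  have hangle_le := InnerProductGeometry.angle_le_pi ξ₁ ξ₂
  have hφ0 : 0 ≤ Real.pi - InnerProductGeometry.angle ξ₁ ξ₂ := by linarith
  have hφM : (Real.pi - InnerProductGeometry.angle ξ₁ ξ₂) * M₁ ≤ Real.pi :=
    (le_div_iff₀ hM₁0).mp hang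
  have hcos : 2 * (1 + Real.cos (InnerProductGeometry.angle ξ₁ ξ₂)) ≤
      (Real.pi - InnerProductGeometry.angle ξ₁ ξ₂) ^ 2 := by
    have h := Real.one_sub_sq_div_two_le_cos
      (x := Real.pi - InnerProductGeometry.angle ξ₁ ξ₂)
    rw [Real.cos_pi_sub] at h
    linarith
  have hinner : (inner ℝ ξ₁ ξ₂ : ℝ) =
      ‖ξ₁‖ * ‖ξ₂‖ * Real.cos (InnerProductGeometry.angle ξ₁ ξ₂) := by
    rw [InnerProductGeometry.cos_angle]
    field_simp
  have hXsq : ‖ξ₁ + ξ₂‖ ^ 2 = (‖ξ₁‖ - ‖ξ₂‖) ^ 2 +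
      2 * ‖ξ₁‖ * ‖ξ₂‖ * (1 + Real.cos (InnerProductGeometry.angle ξ₁ ξ₂)) := by
    rw [norm_add_sq_real, hinner]
    ring
  have hmain := res_arith_aux c ‖ξ₁ + ξ₂‖ ‖ξ₁‖ ‖ξ₂‖ N₀ N₁ N₂ M₁
    (Real.pi - InnerProductGeometry.angle ξ₁ ξ₂)
    (Real.cos (InnerProductGeometry.angle ξ₁ ξ₂))
    hc0 hc1 ha0 hb0 hX0 hN₀ hN₁ hN₂ hξ hξ₁N hξ₂N hM₁0 hM₁sq hφ0 hφM hXsq hcos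
  -- assemble
  have hjb : ∀ r : ℝ, |r| ≤ jb r := fun r => by
    rw [jb, ← Real.sqrt_sq_eq_abs]
    exact Real.sqrt_le_sqrt (by nlinarith)
  have hσabs : |σ * c * ‖ξ₁ + ξ₂‖| = c * ‖ξ₁ + ξ₂‖ := by
    rcases hσ with h | h <;> rw [h] <;>
      simp [abs_mul, abs_of_pos hc0, abs_of_pos hX0]
  have hres : |‖ξ₁‖ - ‖ξ₂‖| - c * ‖ξ₁ + ξ₂‖ ≤
      |(τ₁ + τ₂ + σ * c * ‖ξ₁ + ξ₂‖) - (τ₁ - ‖ξ₁‖) - (τ₂ + ‖ξ₂‖)| := by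
    have he : (τ₁ + τ₂ + σ * c * ‖ξ₁ + ξ₂‖) - (τ₁ - ‖ξ₁‖) - (τ₂ + ‖ξ₂‖)
        = (‖ξ₁‖ - ‖ξ₂‖) - -(σ * c * ‖ξ₁ + ξ₂‖) := by ring
    rw [he]
    calc |‖ξ₁‖ - ‖ξ₂‖| - c * ‖ξ₁ + ξ₂‖
        = |‖ξ₁‖ - ‖ξ₂‖| - |(-(σ * c * ‖ξ₁ + ξ₂‖))| := by rw [abs_neg, hσabs]
      _ ≤ |(‖ξ₁‖ - ‖ξ₂‖) - -(σ * c * ‖ξ₁ + ξ₂‖)| := abs_sub_abs_le_abs_sub _ _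
  have htri : |(τ₁ + τ₂ + σ * c * ‖ξ₁ + ξ₂‖) - (τ₁ - ‖ξ₁‖) - (τ₂ + ‖ξ₂‖)| ≤
      |τ₁ + τ₂ + σ * c * ‖ξ₁ + ξ₂‖| + |τ₁ - ‖ξ₁‖| + |τ₂ + ‖ξ₂‖| := by
    calc |(τ₁ + τ₂ + σ * c * ‖ξ₁ + ξ₂‖) - (τ₁ - ‖ξ₁‖) - (τ₂ + ‖ξ₂‖)|
        ≤ |(τ₁ + τ₂ + σ * c * ‖ξ₁ + ξ₂‖) - (τ₁ - ‖ξ₁‖)| + |τ₂ + ‖ξ₂‖| := abs_sub _ _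
      _ ≤ |τ₁ + τ₂ + σ * c * ‖ξ₁ + ξ₂‖| + |τ₁ - ‖ξ₁‖| + |τ₂ + ‖ξ₂‖| := by
          have := abs_sub (τ₁ + τ₂ + σ * c * ‖ξ₁ + ξ₂‖) (τ₁ - ‖ξ₁‖)
          linarith
  have hMA : jb (τ₁ + τ₂ + σ * c * ‖ξ₁ + ξ₂‖) ≤
      max (jb (τ₁ + τ₂ + σ * c * ‖ξ₁ + ξ₂‖)) (max (jb (τ₁ - ‖ξ₁‖)) (jb (τ₂ + ‖ξ₂‖))) :=
    le_max_left _ _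
  have hMB : jb (τ₁ - ‖ξ₁‖) ≤
      max (jb (τ₁ + τ₂ + σ * c * ‖ξ₁ + ξ₂‖)) (max (jb (τ₁ - ‖ξ₁‖)) (jb (τ₂ + ‖ξ₂‖))) :=
    le_trans (le_max_left _ _) (le_max_right _ _)
  have hMC : jb (τ₂ + ‖ξ₂‖) ≤
      max (jb (τ₁ + τ₂ + σ * c * ‖ξ₁ + ξ₂‖)) (max (jb (τ₁ - ‖ξ₁‖)) (jb (τ₂ + ‖ξ₂‖))) :=
    le_trans (le_max_right _ _) (le_max_right _ _)
  have h1 := hjb (τ₁ + τ₂ + σ * c * ‖ξ₁ + ξ₂‖)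
  have h2 := hjb (τ₁ - ‖ξ₁‖)
  have h3 := hjb (τ₂ + ‖ξ₂‖)
  linarith
end
end
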